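/- Let W ∈ L(H) be a positive operator, S ⊆ H a closed subspace, and T the shorted operator of W to S. Then the pair (W, ker T) is compatible if and only if T is the maximum of M⁻(W,S) with respect to the minus order, i.e. T ∈ M⁻(W,S) and X ⁻≤ T for every X ∈ M⁻(W,S). -/

import Mathlib

open ContinuousLinearMap
open scoped ComplexInnerProductSpace

set_option synthInstance.maxHeartbeats 400000
set_option maxHeartbeats 1000000

noncomputable section

variable {H : Type*} [NormedAddCommGroup H] [InnerProductSpace ℂ H] [CompleteSpace H]

/-- `M(W,S)`: the set of operators `X` with `0 ≤ X ≤ W` (Loewner order) and `range X ⊆ S^⊥`. -/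
def MSet (W : H →L[ℂ] H) (S : Submodule ℂ H) : Set (H →L[ℂ] H) :=
  {X | X.IsPositive ∧ (W - X).IsPositive ∧ LinearMap.range (X : H →ₗ[ℂ] H) ≤ Sᗮ}

/-- `T` is the shorted operator of `W` to `S`, i.e. the maximum of `M(W,S)` in the Loewner
order. -/
def IsShorted (W : H →L[ℂ] H) (S : Submodule ℂ H) (T : H →L[ℂ] H) : Prop :=
  T ∈ MSet W S ∧ ∀ X ∈ MSet W S, (T - X).IsPositive

/-- The minus order: `A ⁻≤ B` iff there are bounded idempotents `P, Q` with `A = PB` and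
`A* = QB*`. -/
def MinusLE (A B : H →L[ℂ] H) : Prop :=
  ∃ P Q : H →L[ℂ] H, IsIdempotentElem P ∧ IsIdempotentElem Q ∧
    A = P ∘L B ∧ adjoint A = Q ∘L adjoint B

/-- The pair `(W, N)` is compatible: there is a bounded idempotent `Q` with range `N` such that
`WQ` is selfadjoint. -/
def Compatible (W : H →L[ℂ] H) (N : Submodule ℂ H) : Prop :=
  ∃ Q : H →L[ℂ] H, IsIdempotentElem Q ∧ LinearMap.range (Q : H →ₗ[ℂ] H) = N ∧ IsSelfAdjoint (W ∘L Q)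

/-- `M⁻(W,S)`: operators `X` with `X ⁻≤ W`, `range X ⊆ S^⊥` and `range X* ⊆ S^⊥`. -/
def MMinusSet (W : H →L[ℂ] H) (S : Submodule ℂ H) : Set (H →L[ℂ] H) :=
  {X | MinusLE X W ∧ LinearMap.range (X : H →ₗ[ℂ] H) ≤ Sᗮ ∧ LinearMap.range ((adjoint X : H →L[ℂ] H) : H →ₗ[ℂ] H) ≤ Sᗮ}

/-- `X₀` is a `W`-inverse of `M` in `R(C)`: for every `x`, `X₀ x` is a `W`-weighted least squares
solution of `M z = C x`. -/
def WInverseIn (W M C X₀ : H →L[ℂ] H) : Prop :=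
  ∀ x z : H, (⟪W (M (X₀ x) - C x), M (X₀ x) - C x⟫).re ≤ (⟪W (M z - C x), M z - C x⟫).re

/-- The left weighted star order `A ₋*_W≤ B`. -/
def LStarW (W A B : H →L[ℂ] H) : Prop :=
  LinearMap.range ((B : H →L[ℂ] H) : H →ₗ[ℂ] H) = LinearMap.range ((A : H →L[ℂ] H) : H →ₗ[ℂ] H) ⊔ LinearMap.range ((B - A : H →L[ℂ] H) : H →ₗ[ℂ] H) ∧
  LinearMap.range ((A : H →L[ℂ] H) : H →ₗ[ℂ] H) ⊓ LinearMap.range ((B - A : H →L[ℂ] H) : H →ₗ[ℂ] H) = ⊥ ∧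
  LinearMap.range ((B - A : H →L[ℂ] H) : H →ₗ[ℂ] H) ≤ LinearMap.ker ((adjoint A ∘L W : H →L[ℂ] H) : H →ₗ[ℂ] H)

/-- The right weighted star order `A ≤*_W B`. -/
def RStarW (W A B : H →L[ℂ] H) : Prop :=
  LinearMap.range ((adjoint B : H →L[ℂ] H) : H →ₗ[ℂ] H) =
    LinearMap.range ((adjoint A : H →L[ℂ] H) : H →ₗ[ℂ] H) ⊔ LinearMap.range ((adjoint B - adjoint A : H →L[ℂ] H) : H →ₗ[ℂ] H) ∧
  LinearMap.range ((adjoint A : H →L[ℂ] H) : H →ₗ[ℂ] H) ⊓ LinearMap.range ((adjoint B - adjoint A : H →L[ℂ] H) : H →ₗ[ℂ] H) = ⊥ ∧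
  LinearMap.range ((adjoint B - adjoint A : H →L[ℂ] H) : H →ₗ[ℂ] H) ≤ LinearMap.ker ((A ∘L W : H →L[ℂ] H) : H →ₗ[ℂ] H)

/-- The weighted star order `A *_W≤ B`. -/
def StarW (W A B : H →L[ℂ] H) : Prop :=
  LStarW W A B ∧ RStarW W A B

lemma sa_inner {B : H →L[ℂ] H} (hB : ContinuousLinearMap.adjoint B = B) (y z : H) :
    ⟪B y, z⟫ = ⟪y, B z⟫ := by
  nth_rewrite 1 [← hB]; exact adjoint_inner_left B z y

/-- Key lemma: an operator of the form `P ∘ W` vanishing on `S` vanishes on `ker T`,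
where `T` is the shorted operator of the positive `W` to `S`. -/
lemma key_ker (W T : H →L[ℂ] H) (S : Submodule ℂ H) (hW : W.IsPositive)
    (hT : IsShorted W S T) (X P : H →L[ℂ] H) (hX : X = P ∘L W)
    (hXS : ∀ s ∈ S, X s = 0) {x : H} (hx : T x = 0) : X x = 0 := by
  have hW0 : (0:H →L[ℂ] H) ≤ W := (W.nonneg_iff_isPositive).2 hW
  set R := CFC.sqrt W with hRdef
  have hR2 : R ∘L R = W := by
    rw [← ContinuousLinearMap.mul_def]; exact CFC.sqrt_mul_sqrt_self W hW0
  have hRpos : R.IsPositive := (R.nonneg_iff_isPositive).1 (CFC.sqrt_nonneg W)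
  have hRsa : adjoint R = R := hRpos.isSelfAdjoint
  set M := (S.map (R : H →ₗ[ℂ] H)).topologicalClosure with hMdef
  haveI : CompleteSpace M := (Submodule.isClosed_topologicalClosure _).completeSpace_coe
  haveI : CompleteSpace (Mᗮ : Submodule ℂ H) := (Submodule.isClosed_orthogonal M).completeSpace_coe
  set Pc : H →L[ℂ] H := (Mᗮ).subtypeL ∘L Submodule.orthogonalProjection Mᗮ with hPcdef
  have hPcmem : ∀ y, Pc y ∈ Mᗮ := fun y => (Submodule.orthogonalProjection Mᗮ y).2
  have hPcsa : IsSelfAdjoint Pc := isSelfAdjoint_starProjection (Mᗮ)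
  have hPcinner : ∀ y z : H, ⟪Pc y, z⟫ = ⟪Pc y, Pc z⟫ := by
    intro y z
    have h1 : z - Pc z ∈ (Mᗮ)ᗮ := Submodule.sub_starProjection_mem_orthogonal (K := Mᗮ) z
    have h2 : ⟪Pc y, z - Pc z⟫ = 0 :=
      Submodule.inner_right_of_mem_orthogonal (hPcmem y) h1
    rw [inner_sub_right, sub_eq_zero] at h2
    exact h2
  have hRinner : ∀ y z : H, ⟪R y, z⟫ = ⟪y, R z⟫ := by
    intro y z; nth_rewrite 1 [← hRsa]; exact adjoint_inner_left R z y
  set X₀ : H →L[ℂ] H := R ∘L (Pc ∘L R) with hX₀def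
  have hX₀app : ∀ y, X₀ y = R (Pc (R y)) := fun y => rfl
  have hX₀inner : ∀ y, ⟪X₀ y, y⟫ = ⟪Pc (R y), Pc (R y)⟫ := by
    intro y
    rw [hX₀app, hRinner, ← hPcinner]
  have hX₀sa : IsSelfAdjoint X₀ := by
    rw [isSelfAdjoint_iff'] at hPcsa ⊢
    rw [hX₀def, adjoint_comp, adjoint_comp, hPcsa, hRsa, comp_assoc]
  have hX₀pos : X₀.IsPositive := by
    refine ⟨isSelfAdjoint_iff_isSymmetric.1 hX₀sa, fun y => ?_⟩
    rw [reApplyInnerSelf, hX₀inner]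
    exact inner_self_nonneg
  have hWX₀pos : (W - X₀).IsPositive := by
    refine ⟨isSelfAdjoint_iff_isSymmetric.1 ((isSelfAdjoint_iff'.2 hW.isSelfAdjoint).sub hX₀sa), fun y => ?_⟩
    rw [reApplyInnerSelf]
    have : (W - X₀) y = R (R y - Pc (R y)) := by
      simp only [sub_apply, hX₀app, ← hR2, comp_apply, map_sub]
    rw [this, hRinner]
    have h1 : R y - Pc (R y) ∈ (Mᗮ)ᗮ := Submodule.sub_starProjection_mem_orthogonal (K := Mᗮ) (R y)
    have h2 : ⟪R y - Pc (R y), Pc (R y)⟫ = 0 :=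
      Submodule.inner_left_of_mem_orthogonal (hPcmem (R y)) h1
    have : ⟪R y - Pc (R y), R y⟫ = ⟪R y - Pc (R y), R y - Pc (R y)⟫ := by
      rw [inner_sub_right, h2, sub_zero]
    rw [this]
    exact inner_self_nonneg
  have hX₀ran : LinearMap.range (X₀ : H →ₗ[ℂ] H) ≤ Sᗮ := by
    rintro _ ⟨y, rfl⟩
    rw [Submodule.mem_orthogonal]
    intro s hs
    rw [ContinuousLinearMap.coe_coe, hX₀app, ← hRinner]
    have hRs : R s ∈ M := Submodule.le_topologicalClosure _ ⟨s, hs, rfl⟩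
    exact (Submodule.inner_right_of_mem_orthogonal hRs (hPcmem (R y))).symm ▸
      Submodule.inner_right_of_mem_orthogonal hRs (hPcmem (R y))
  have hTX₀ : (T - X₀).IsPositive := hT.2 X₀ ⟨hX₀pos, hWX₀pos, hX₀ran⟩
  have hPcRx : Pc (R x) = 0 := by
    have h1 : 0 ≤ Complex.re ⟪(T - X₀) x, x⟫ := hTX₀.2 x
    rw [sub_apply, hx, zero_sub, inner_neg_left] at h1
    have h2 : Complex.re ⟪X₀ x, x⟫ ≤ 0 := by
      have := h1; rw [Complex.neg_re] at this; linarith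
    rw [hX₀inner] at h2
    have h3 : Complex.re ⟪Pc (R x), Pc (R x)⟫ = 0 :=
      le_antisymm h2 (inner_self_nonneg (𝕜 := ℂ) (x := Pc (R x)))
    have h4 : ‖Pc (R x)‖ ^ 2 = 0 := by
      rw [← inner_self_eq_norm_sq (𝕜 := ℂ)]; exact h3
    exact norm_eq_zero.1 ((pow_eq_zero_iff (two_ne_zero)).1 h4)
  have hRxM : R x ∈ M := by
    have : R x - Pc (R x) ∈ (Mᗮ)ᗮ := Submodule.sub_starProjection_mem_orthogonal (K := Mᗮ) (R x)
    rw [hPcRx, sub_zero] at this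
    rwa [Submodule.orthogonal_orthogonal] at this
  obtain ⟨u, hu, hulim⟩ := mem_closure_iff_seq_limit.1 hRxM
  have hXx : ∀ n, ∃ s ∈ S, R s = u n := by
    intro n
    obtain ⟨s, hs, hsu⟩ := hu n
    exact ⟨s, hs, hsu⟩
  choose s hsS hsR using hXx
  have hlim : Filter.Tendsto (fun n => P (R (u n))) Filter.atTop (nhds (P (R (R x)))) :=
    ((P.continuous.comp R.continuous).tendsto _).comp hulim
  have hconst : ∀ n, P (R (u n)) = 0 := by
    intro n
    have : P (R (u n)) = X (s n) := by
      rw [hX, comp_apply, ← hR2, comp_apply, hsR]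
    rw [this]; exact hXS _ (hsS n)
  have : X x = P (R (R x)) := by rw [hX, comp_apply, ← hR2, comp_apply]
  rw [this]
  exact tendsto_nhds_unique (by simpa only [hconst] using hlim) tendsto_const_nhds

/-- `(W, ker T)` is compatible iff `T` is the maximum of `M⁻(W,S)` for the
minus order. -/
theorem stmt6 (W T : H →L[ℂ] H) (S : Submodule ℂ H) (hS : IsClosed (S : Set H))
    (hW : W.IsPositive) (hT : IsShorted W S T) :
    Compatible W (LinearMap.ker (T : H →ₗ[ℂ] H)) ↔
      T ∈ MMinusSet W S ∧ ∀ X ∈ MMinusSet W S, MinusLE X T := by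
  have hTpos : T.IsPositive := hT.1.1
  have hTsa : adjoint T = T := hTpos.isSelfAdjoint
  have hWsa : adjoint W = W := hW.isSelfAdjoint
  have hWTpos : (W - T).IsPositive := hT.1.2.1
  have hranT : LinearMap.range (T : H →ₗ[ℂ] H) ≤ Sᗮ := hT.1.2.2
  have hSkerT : ∀ s ∈ S, T s = 0 := by
    intro s hs
    have h1 : ⟪T s, T s⟫ = ⟪s, T (T s)⟫ := sa_inner hTsa s (T s)
    have h2 : ⟪s, T (T s)⟫ = 0 :=
      Submodule.inner_right_of_mem_orthogonal hs (hranT ⟨T s, rfl⟩)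
    exact inner_self_eq_zero.1 (h1.trans h2)
  constructor
  · -- compatibility ⇒ minus-maximum
    rintro ⟨Q, hQidem, hQran, hQWsa⟩
    have hQapp : ∀ z, Q (Q z) = Q z := by
      intro z
      have := DFunLike.congr_fun hQidem z
      rwa [ContinuousLinearMap.mul_apply] at this
    set E : H →L[ℂ] H := 1 - Q with hEdef
    have hEapp : ∀ z, E z = z - Q z := fun z => rfl
    have hEE : ∀ z, E (E z) = E z := by
      intro z; simp only [hEapp, map_sub, hQapp]; abel
    have hQE : ∀ z, Q (E z) = 0 := by
      intro z; simp only [hEapp, map_sub, hQapp, sub_self]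
    have hTQ : ∀ z, T (Q z) = 0 := by
      intro z
      have : Q z ∈ LinearMap.range (Q : H →ₗ[ℂ] H) := ⟨z, rfl⟩
      rw [hQran] at this
      exact this
    have hQfix : ∀ z, T z = 0 → Q z = z := by
      intro z hz
      have : z ∈ LinearMap.range (Q : H →ₗ[ℂ] H) := by rw [hQran]; exact hz
      obtain ⟨y, rfl⟩ := this
      exact hQapp y
    have hTE : ∀ z, T (E z) = T z := by
      intro z; simp only [hEapp, map_sub, hTQ, sub_zero]
    have hWQsa : adjoint (W ∘L Q) = W ∘L Q := hQWsa
    have hWEsa : adjoint (W ∘L E) = W ∘L E := by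
      have h1 : W ∘L E = W - W ∘L Q := by ext z; simp [hEapp]
      rw [h1, map_sub, hWQsa, hWsa]
    have h0 : ∀ y z, ⟪W (E y), Q z⟫ = 0 := by
      intro y z
      have e1 : ⟪W (E y), Q z⟫ = ⟪E y, (W ∘L Q) z⟫ := sa_inner hWsa (E y) (Q z)
      rw [e1, (sa_inner hWQsa (E y) z).symm]
      simp only [comp_apply, hQE, map_zero, inner_zero_left]
    have hWEinner : ∀ z, ⟪(W ∘L E) z, z⟫ = ⟪W (E z), E z⟫ := by
      intro z
      have hz : z = E z + Q z := by rw [hEapp]; abel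
      rw [comp_apply]
      nth_rewrite 2 [hz]
      rw [inner_add_right, h0, add_zero]
    have hTinner : ∀ z, ⟪T z, z⟫ = ⟪T (E z), E z⟫ := by
      intro z
      have hz : z = E z + Q z := by rw [hEapp]; abel
      have e1 : ⟪T (E z), Q z⟫ = ⟪E z, T (Q z)⟫ := sa_inner hTsa (E z) (Q z)
      nth_rewrite 1 [← hTE z]
      nth_rewrite 2 [hz]
      rw [inner_add_right, e1, hTQ, inner_zero_right, add_zero]
    have hWEmem : (W ∘L E) ∈ MSet W S := by
      refine ⟨⟨isSelfAdjoint_iff_isSymmetric.1 (isSelfAdjoint_iff'.2 hWEsa), fun z => ?_⟩, ⟨?_, fun z => ?_⟩, ?_⟩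
      · rw [reApplyInnerSelf_apply, hWEinner]
        exact hW.re_inner_nonneg_left (E z)
      · have h1 : W - W ∘L E = W ∘L Q := by ext z; simp [hEapp]
        rw [h1, ← isSelfAdjoint_iff_isSymmetric, isSelfAdjoint_iff']
        exact hWQsa
      · have h1 : W - W ∘L E = W ∘L Q := by ext z; simp [hEapp]
        rw [h1, reApplyInnerSelf_apply, comp_apply]
        have hz : z = Q z + E z := by rw [hEapp]; abel
        have e1 : ⟪W (Q z), E z⟫ = 0 := by
          rw [sa_inner hWsa (Q z) (E z), ← inner_conj_symm, h0, map_zero]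
        nth_rewrite 2 [hz]
        rw [inner_add_right, e1, add_zero]
        exact hW.re_inner_nonneg_left (Q z)
      · rintro _ ⟨z, rfl⟩
        rw [Submodule.mem_orthogonal]
        intro s hs
        have hQs : Q s = s := hQfix s (hSkerT s hs)
        have hEs : E s = 0 := by rw [hEapp, hQs, sub_self]
        have e1 : ⟪(W ∘L E) z, s⟫ = ⟪z, (W ∘L E) s⟫ := sa_inner hWEsa z s
        have e2 : ⟪z, (W ∘L E) s⟫ = 0 := by
          rw [comp_apply, hEs, map_zero, inner_zero_right]
        rw [ContinuousLinearMap.coe_coe, ← inner_conj_symm, e1.trans e2, map_zero]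
    have hle1 : (T - W ∘L E).IsPositive := hT.2 _ hWEmem
    have hle2 : (W ∘L E - T).IsPositive := by
      refine ⟨isSelfAdjoint_iff_isSymmetric.1 ((isSelfAdjoint_iff'.2 hWEsa).sub (isSelfAdjoint_iff'.2 hTsa)), fun z => ?_⟩
      rw [reApplyInnerSelf_apply, sub_apply, inner_sub_left, map_sub]
      have e3 := hWTpos.re_inner_nonneg_left (E z)
      rw [sub_apply, inner_sub_left, map_sub] at e3
      rw [hWEinner z, hTinner z]
      linarith
    have hTWE : T = W ∘L E :=
      le_antisymm ((le_def T (W ∘L E)).2 hle2) ((le_def (W ∘L E) T).2 hle1)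
    have hEcomp : E ∘L E = E := by ext z; rw [comp_apply]; exact hEE z
    have hE'idem : IsIdempotentElem (adjoint E) := by
      show adjoint E * adjoint E = adjoint E
      rw [ContinuousLinearMap.mul_def, ← adjoint_comp, hEcomp]
    have hTEW : T = adjoint E ∘L W := by
      rw [← hWsa, ← adjoint_comp, ← hTWE, hTsa]
    refine ⟨⟨⟨adjoint E, adjoint E, hE'idem, hE'idem, hTEW, ?_⟩, hranT, ?_⟩, ?_⟩
    · rw [hTsa, hWsa]; exact hTEW
    · rw [hTsa]; exact hranT
    · rintro X ⟨⟨P, Q', hPidem, hQ'idem, hXPW, hXadj⟩, hranX, hranXadj⟩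
      have hXS : ∀ s ∈ S, X s = 0 := by
        intro s hs
        have h1 : ⟪s, adjoint X (X s)⟫ = ⟪X s, X s⟫ := adjoint_inner_right X s (X s)
        have h2 : ⟪s, adjoint X (X s)⟫ = 0 :=
          Submodule.inner_right_of_mem_orthogonal hs (hranXadj ⟨X s, rfl⟩)
        exact inner_self_eq_zero.1 (h1.symm.trans h2)
      have hXadjS : ∀ s ∈ S, adjoint X s = 0 := by
        intro s hs
        have h1 : ⟪adjoint X s, adjoint X s⟫ = ⟪s, X (adjoint X s)⟫ :=
          adjoint_inner_left X (adjoint X s) s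
        have h2 : ⟪s, X (adjoint X s)⟫ = 0 :=
          Submodule.inner_right_of_mem_orthogonal hs (hranX ⟨adjoint X s, rfl⟩)
        exact inner_self_eq_zero.1 (h1.trans h2)
      have hkerX : ∀ z, T z = 0 → X z = 0 := fun z hz =>
        key_ker W T S hW hT X P hXPW hXS hz
      have hXadjPW : adjoint X = Q' ∘L W := by rw [hXadj, hWsa]
      have hkerXadj : ∀ z, T z = 0 → adjoint X z = 0 := fun z hz =>
        key_ker W T S hW hT (adjoint X) Q' hXadjPW hXadjS hz
      refine ⟨P, Q', hPidem, hQ'idem, ?_, ?_⟩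
      · ext z
        have e1 : (P ∘L T) z = X (E z) := by
          simp only [hXPW, hTWE, comp_apply]
        rw [e1, hEapp, map_sub, hkerX _ (hTQ z), sub_zero]
      · rw [hTsa]
        ext z
        have e1 : (Q' ∘L T) z = adjoint X (E z) := by
          simp only [hXadjPW, hTWE, comp_apply]
        rw [e1, hEapp, map_sub, hkerXadj _ (hTQ z), sub_zero]
  · -- minus-maximum ⇒ compatibility
    rintro ⟨⟨⟨P0, Q0, hP0, hQ0, hTP0W, hTQ0W⟩, -, -⟩, -⟩
    have hTQW' : T = Q0 ∘L W := by rw [← hTsa, hTQ0W, hWsa]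
    set E : H →L[ℂ] H := adjoint Q0 with hEdef
    have hTWE : T = W ∘L E := by
      nth_rewrite 1 [← hTsa]
      rw [hTQW', adjoint_comp, hWsa]
    have hEcomp : E ∘L E = E := by
      have h : Q0 ∘L Q0 = Q0 := hQ0
      rw [hEdef, ← adjoint_comp, h]
    have hEE : ∀ z, E (E z) = E z := by
      intro z
      have := DFunLike.congr_fun hEcomp z
      rwa [comp_apply] at this
    set K : Submodule ℂ H := LinearMap.ker (W : H →ₗ[ℂ] H) ⊓ LinearMap.ker ((1 - E : H →L[ℂ] H) : H →ₗ[ℂ] H) with hKdef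
    have hKclosed : IsClosed (K : Set H) := by
      have : (K : Set H) = (LinearMap.ker (W : H →ₗ[ℂ] H) : Set H) ∩ (LinearMap.ker ((1 - E : H →L[ℂ] H) : H →ₗ[ℂ] H) : Set H) := rfl
      rw [this]
      exact (ContinuousLinearMap.isClosed_ker W).inter (ContinuousLinearMap.isClosed_ker (1 - E))
    haveI : CompleteSpace K := hKclosed.completeSpace_coe
    have hKW : ∀ y ∈ K, W y = 0 := fun y hy => (Submodule.mem_inf.1 hy).1
    have hKE : ∀ y ∈ K, E y = y := by
      intro y hy
      have h := (Submodule.mem_inf.1 hy).2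
      have h2 : y - E y = 0 := by
        have := LinearMap.mem_ker.1 h
        simpa using this
      rw [sub_eq_zero] at h2
      exact h2.symm
    set P₁ : H →L[ℂ] H := K.subtypeL ∘L Submodule.orthogonalProjection K with hP₁def
    have hP₁mem : ∀ y, P₁ y ∈ K := fun y => (Submodule.orthogonalProjection K y).2
    have hP₁fix : ∀ y ∈ K, P₁ y = y := fun y hy => Submodule.starProjection_eq_self_iff.2 hy
    set A : H →L[ℂ] H := (1 - P₁) ∘L E with hAdef
    have hAapp : ∀ z, A z = E z - P₁ (E z) := fun z => rfl
    have hEA : ∀ z, E (A z) = A z := by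
      intro z
      rw [hAapp, map_sub, hEE, hKE _ (hP₁mem (E z))]
    have hP₁A : ∀ z, P₁ (A z) = 0 := by
      intro z
      rw [hAapp, map_sub, hP₁fix _ (hP₁mem (E z)), sub_self]
    have hAA : ∀ z, A (A z) = A z := by
      intro z
      rw [hAapp (A z), hEA, hP₁A, sub_zero]
    set F : H →L[ℂ] H := 1 - A with hFdef
    have hFapp : ∀ z, F z = z - A z := fun z => rfl
    have hFF : ∀ z, F (F z) = F z := by
      intro z
      rw [hFapp (F z), hFapp z, map_sub, hAA]
      abel
    have hFidem : IsIdempotentElem F := by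
      show F * F = F
      ext z
      rw [ContinuousLinearMap.mul_apply]
      exact hFF z
    have hWA : ∀ z, W (A z) = T z := by
      intro z
      rw [hAapp, map_sub, hKW _ (hP₁mem (E z)), sub_zero, hTWE]
      rfl
    have hWF : W ∘L F = W - T := by
      ext z
      rw [comp_apply, hFapp, map_sub, hWA]
      rfl
    have hWFsa : IsSelfAdjoint (W ∘L F) := by
      rw [hWF, isSelfAdjoint_iff', map_sub, hWsa, hTsa]
    have hFran : LinearMap.range (F : H →ₗ[ℂ] H) = LinearMap.ker (T : H →ₗ[ℂ] H) := by
      apply le_antisymm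
      · rintro _ ⟨z, rfl⟩
        have hTA : T (A z) = T z := by
          have h1 : T (A z) = W (E (A z)) := by rw [hTWE]; rfl
          have h2 : T z = W (E z) := by rw [hTWE]; rfl
          rw [h1, h2, hEA, hAapp, map_sub, hKW _ (hP₁mem (E z)), sub_zero]
        show T (F z) = 0
        rw [hFapp, map_sub, hTA, sub_self]
      · intro z hz
        have hzT : T z = 0 := hz
        have hEzK : E z ∈ K := by
          refine Submodule.mem_inf.2 ⟨?_, ?_⟩
          · show W (E z) = 0
            rw [← comp_apply W E, ← hTWE]
            exact hzT
          · show (1 - E) (E z) = 0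
            simp [hEE z]
        have hFz : F z = z := by
          rw [hFapp, hAapp, hP₁fix _ hEzK, sub_self, sub_zero]
        exact ⟨z, hFz⟩
    exact ⟨F, hFidem, hFran, hWFsa⟩
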